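/- arXiv:1607.07383 — 2 statements merged into one kernel-verified Lean document; each statement's English description precedes it below -/
import Mathlib

section
/- Let k ≥ 4 and let x_j = (cos(2πj/k), sin(2πj/k)) for j ∈ ℤ (indices modulo k) be the vertices of the regular k-gon inscribed in the unit circle, with sides the closed segments [x_{j}, x_{j+1}]. Let ρ : ℝ² → ℝ² be the rotation through angle 2π/k about the origin. Suppose the sides [x_{i−1}, x_i] and [x_{j−1}, x_j] are non-adjacent, i.e. the four vertices x_{i−1}, x_i, x_{j−1}, x_j are pairwise distinct. If α is a closed segment with one endpoint in [x_{i−1}, x_i] and the other endpoint in [x_{j−1}, x_j], then α ∩ ρ(α) ≠ ∅. -/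
open Real

section SMRAux

/-- unit vector at angle `α` -/
noncomputable def smrEE (α : ℝ) : ℝ × ℝ := (Real.cos α, Real.sin α)

/-- twice the signed area of the triangle `P Q R` -/
noncomputable def smrCR (P Q R : ℝ × ℝ) : ℝ :=
  (Q.1 - P.1) * (R.2 - P.2) - (Q.2 - P.2) * (R.1 - P.1)

/-- convex combination -/
noncomputable def smrCMB (a : ℝ) (U V : ℝ × ℝ) : ℝ × ℝ :=
  ((1 - a) * U.1 + a * V.1, (1 - a) * U.2 + a * V.2)

lemma smrCR_swap (P Q R : ℝ × ℝ) : smrCR P Q R = - smrCR P R Q := by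
  simp only [smrCR]; ring

lemma smrCMB_zero (U V : ℝ × ℝ) : smrCMB 0 U V = U := by simp [smrCMB]
lemma smrCMB_one (U V : ℝ × ℝ) : smrCMB 1 U V = V := by simp [smrCMB]

lemma smr_id4 (u v : ℝ) :
    Real.sin (2*v) + Real.sin (2*u) - Real.sin (2*u + 2*v)
      = 4 * Real.sin u * Real.sin v * Real.sin (u+v) := by
  rw [show (2:ℝ)*u + 2*v = 2*(u+v) by ring, Real.sin_two_mul, Real.sin_two_mul,
    Real.sin_two_mul, Real.sin_add, Real.cos_add]
  linear_combination (-(2*Real.sin v*Real.cos v)) * Real.sin_sq_add_cos_sq u +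
    (-(2*Real.sin u*Real.cos u)) * Real.sin_sq_add_cos_sq v

lemma smrCR_ee (α β γ : ℝ) :
    smrCR (smrEE α) (smrEE β) (smrEE γ)
      = 4 * Real.sin ((β-α)/2) * Real.sin ((γ-β)/2) * Real.sin ((γ-α)/2) := by
  have hval : smrCR (smrEE α) (smrEE β) (smrEE γ)
      = Real.sin (γ-β) + Real.sin (β-α) - Real.sin (γ-α) := by
    simp only [smrCR, smrEE, Real.sin_sub]
    ring
  have h := smr_id4 ((β-α)/2) ((γ-β)/2)
  rw [show 2*((β-α)/2) = β-α by ring, show 2*((γ-β)/2) = γ-β by ring] at h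
  rw [show (β-α) + (γ-β) = γ-α by ring] at h
  rw [hval, h, show (β-α)/2 + (γ-β)/2 = (γ-α)/2 by ring]

lemma smrCR_ee_nonneg (α β γ : ℝ) (h1 : α ≤ β) (h2 : β ≤ γ) (h3 : γ - α ≤ 2*π) :
    0 ≤ smrCR (smrEE α) (smrEE β) (smrEE γ) := by
  have pi_pos := Real.pi_pos
  rw [smrCR_ee]
  have s1 : 0 ≤ Real.sin ((β-α)/2) :=
    Real.sin_nonneg_of_nonneg_of_le_pi (by linarith) (by linarith)
  have s2 : 0 ≤ Real.sin ((γ-β)/2) :=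
    Real.sin_nonneg_of_nonneg_of_le_pi (by linarith) (by linarith)
  have s3 : 0 ≤ Real.sin ((γ-α)/2) :=
    Real.sin_nonneg_of_nonneg_of_le_pi (by linarith) (by linarith)
  have h4 : (0:ℝ) ≤ 4 := by norm_num
  exact mul_nonneg (mul_nonneg (mul_nonneg h4 s1) s2) s3

lemma smrCR_ee_pos (α β γ : ℝ) (h1 : α < β) (h2 : β < γ) (h3 : γ - α < 2*π) :
    0 < smrCR (smrEE α) (smrEE β) (smrEE γ) := by
  have pi_pos := Real.pi_pos
  rw [smrCR_ee]
  have s1 : 0 < Real.sin ((β-α)/2) :=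
    Real.sin_pos_of_pos_of_lt_pi (by linarith) (by linarith)
  have s2 : 0 < Real.sin ((γ-β)/2) :=
    Real.sin_pos_of_pos_of_lt_pi (by linarith) (by linarith)
  have s3 : 0 < Real.sin ((γ-α)/2) :=
    Real.sin_pos_of_pos_of_lt_pi (by linarith) (by linarith)
  have h4 : (0:ℝ) < 4 := by norm_num
  exact mul_pos (mul_pos (mul_pos h4 s1) s2) s3

lemma smrCR_cmb (a b c : ℝ) (A B C D E F : ℝ × ℝ) :
    smrCR (smrCMB a A B) (smrCMB b C D) (smrCMB c E F) =
      (1-a)*(1-b)*(1-c) * smrCR A C E + (1-a)*(1-b)*c * smrCR A C F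
    + (1-a)*b*(1-c) * smrCR A D E + (1-a)*b*c * smrCR A D F
    + a*(1-b)*(1-c) * smrCR B C E + a*(1-b)*c * smrCR B C F
    + a*b*(1-c) * smrCR B D E + a*b*c * smrCR B D F := by
  simp only [smrCR, smrCMB]; ring

lemma smr_mem_seg {U V : ℝ × ℝ} {a : ℝ} (h0 : 0 ≤ a) (h1 : a ≤ 1) :
    smrCMB a U V ∈ segment ℝ U V := by
  refine ⟨1 - a, a, by linarith, h0, by ring, ?_⟩
  simp [smrCMB, Prod.ext_iff, Prod.smul_fst, Prod.smul_snd, smul_eq_mul]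

lemma smr_seg_repr {U V p : ℝ × ℝ} (h : p ∈ segment ℝ U V) :
    ∃ a, 0 ≤ a ∧ a ≤ 1 ∧ p = smrCMB a U V := by
  obtain ⟨u, v, hu, hv, huv, rfl⟩ := h
  refine ⟨v, hv, by linarith, ?_⟩
  have hu' : u = 1 - v := by linarith
  subst hu'
  simp [smrCMB, Prod.ext_iff, Prod.smul_fst, Prod.smul_snd, smul_eq_mul]

lemma smr_cramer (u1 u2 v1 v2 w1 w2 : ℝ) (h1 : u1*w2 - u2*w1 = 0)
    (h2 : v1*w2 - v2*w1 = 0) (h3 : u1*v2 - u2*v1 ≠ 0) : w1 = 0 ∧ w2 = 0 := by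
  constructor
  · have e1 : (u1*v2 - u2*v1) * w1 = 0 := by linear_combination v1 * h1 - u1 * h2
    exact (mul_eq_zero.mp e1).resolve_left h3
  · have e2 : (u1*v2 - u2*v1) * w2 = 0 := by linear_combination v2 * h1 - u2 * h2
    exact (mul_eq_zero.mp e2).resolve_left h3

lemma smr_seg_inter (a b c d : ℝ × ℝ)
    (h12 : smrCR a b c * smrCR a b d ≤ 0) (h34 : smrCR c d a * smrCR c d b ≤ 0)
    (hne1 : smrCR a b c ≠ 0 ∨ smrCR a b d ≠ 0)
    (hne2 : smrCR c d a ≠ 0 ∨ smrCR c d b ≠ 0) :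
    (segment ℝ a b ∩ segment ℝ c d).Nonempty := by
  clear hne2
  set d1 := smrCR a b c with hd1
  set d2 := smrCR a b d with hd2
  set d3 := smrCR c d a with hd3
  set d4 := smrCR c d b with hd4
  have hkey : d3 - d4 = d2 - d1 := by simp only [hd1, hd2, hd3, hd4, smrCR]; ring
  have hd12 : d1 ≠ d2 := by
    intro h
    have h0 : d1 = 0 := by nlinarith
    have h0' : d2 = 0 := by rw [← h]; exact h0
    rcases hne1 with h' | h' <;> exact h' (by assumption)
  have hd34 : d3 ≠ d4 := by intro h; exact hd12 (by linarith [hkey, sub_eq_zero.mpr h])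
  have hbound : ∀ e1 e2 : ℝ, e1 * e2 ≤ 0 → e1 ≠ e2 →
      0 ≤ e1 / (e1 - e2) ∧ e1 / (e1 - e2) ≤ 1 := by
    intro e1 e2 hprod hne
    have hne' : e1 - e2 ≠ 0 := sub_ne_zero.mpr hne
    rcases mul_nonpos_iff.mp hprod with ⟨he1, he2⟩ | ⟨he1, he2⟩
    · have hden : 0 < e1 - e2 := lt_of_le_of_ne (by linarith) (Ne.symm hne')
      constructor
      · exact div_nonneg he1 hden.le
      · rw [div_le_one hden]; linarith
    · have hden : e1 - e2 < 0 := lt_of_le_of_ne (by linarith) hne'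
      constructor
      · exact div_nonneg_iff.mpr (Or.inr ⟨he1, hden.le⟩)
      · rw [div_le_one_iff]; right; right; exact ⟨hden, by linarith⟩
  obtain ⟨ht0, ht1⟩ := hbound d1 d2 h12 hd12
  obtain ⟨hs0, hs1⟩ := hbound d3 d4 h34 hd34
  set t := d1 / (d1 - d2) with htdef
  set s := d3 / (d3 - d4) with hsdef
  set z := smrCMB t c d with hzdef
  set z2 := smrCMB s a b with hz2def
  have hsub1 : d1 - d2 ≠ 0 := sub_ne_zero.mpr hd12
  have hsub2 : d3 - d4 ≠ 0 := sub_ne_zero.mpr hd34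
  have hcrabz : smrCR a b z = 0 := by
    have expand : smrCR a b (smrCMB t c d) = (1-t)*d1 + t*d2 := by
      simp only [hd1, hd2, smrCR, smrCMB]; ring
    rw [hzdef, expand, htdef]
    field_simp
    ring
  have hcrcdz : smrCR c d z = 0 := by simp only [hzdef, smrCR, smrCMB]; ring
  have hcrabz2 : smrCR a b z2 = 0 := by simp only [hz2def, smrCR, smrCMB]; ring
  have hcrcdz2 : smrCR c d z2 = 0 := by
    have expand : smrCR c d (smrCMB s a b) = (1-s)*d3 + s*d4 := by
      simp only [hd3, hd4, smrCR, smrCMB]; ring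
    rw [hz2def, expand, hsdef]
    field_simp
    ring
  have hdet : (b.1-a.1)*(d.2-c.2) - (b.2-a.2)*(d.1-c.1) = d2 - d1 := by
    simp only [hd1, hd2, smrCR]; ring
  have hzz : z = z2 := by
    have h1' : (b.1-a.1)*(z.2-z2.2) - (b.2-a.2)*(z.1-z2.1) = 0 := by
      have hh : smrCR a b z - smrCR a b z2
          = (b.1-a.1)*(z.2-z2.2) - (b.2-a.2)*(z.1-z2.1) := by
        simp only [smrCR]; ring
      rw [← hh, hcrabz, hcrabz2]; ring
    have h2' : (d.1-c.1)*(z.2-z2.2) - (d.2-c.2)*(z.1-z2.1) = 0 := by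
      have hh : smrCR c d z - smrCR c d z2
          = (d.1-c.1)*(z.2-z2.2) - (d.2-c.2)*(z.1-z2.1) := by
        simp only [smrCR]; ring
      rw [← hh, hcrcdz, hcrcdz2]; ring
    have h3' : (b.1-a.1)*(d.2-c.2) - (b.2-a.2)*(d.1-c.1) ≠ 0 := by
      rw [hdet]; intro h; exact hd12 (by linarith)
    obtain ⟨hw1, hw2⟩ := smr_cramer (b.1-a.1) (b.2-a.2) (d.1-c.1) (d.2-c.2)
      (z.1-z2.1) (z.2-z2.2) h1' h2' h3'
    exact Prod.ext (by linarith) (by linarith)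
  exact ⟨z, by rw [hzz]; exact smr_mem_seg hs0 hs1, smr_mem_seg ht0 ht1⟩

lemma smr_stsolve (a b : ℝ) (E1 : (1-a)*(1-a)*(1-b) = 0) (E2 : a*a*b = 0)
    (E3 : (1-a)*(1-b)*(1-b) = 0) (E4 : a*b*b = 0) :
    (a = 1 ∧ b = 0) ∨ (a = 0 ∧ b = 1) := by
  rcases mul_eq_zero.mp E2 with h | h
  · have ha : a = 0 := mul_self_eq_zero.mp h
    right
    refine ⟨ha, ?_⟩
    have h3 : (1-b)*(1-b) = 0 := by linear_combination E3 + (1-b)*(1-b)*ha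
    have := mul_self_eq_zero.mp h3
    linarith
  · left
    have h1 : (1-a)*(1-a) = 0 := by linear_combination E1 + (1-a)*(1-a)*h
    have := mul_self_eq_zero.mp h1
    exact ⟨by linarith, h⟩

end SMRAux

set_option maxHeartbeats 1000000

/-- In the regular `k`-gon (`k ≥ 4`) inscribed in the unit circle, with `ρ` the rotation
through angle `2π/k` about the origin: a closed segment `α` joining two non-adjacent sides
`[x_{i-1}, x_i]` and `[x_{j-1}, x_j]` (i.e. the four vertices are pairwise distinct)
must meet its rotated image `ρ(α)`. -/
theorem segment_meets_rotation (k : ℕ) (hk : 4 ≤ k)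
    (x : ℤ → ℝ × ℝ)
    (hx : ∀ j : ℤ, x j = (Real.cos (2 * Real.pi * j / k), Real.sin (2 * Real.pi * j / k)))
    (ρ : ℝ × ℝ → ℝ × ℝ)
    (hρ : ∀ v : ℝ × ℝ, ρ v =
      (Real.cos (2 * Real.pi / k) * v.1 - Real.sin (2 * Real.pi / k) * v.2,
       Real.sin (2 * Real.pi / k) * v.1 + Real.cos (2 * Real.pi / k) * v.2))
    (i j : ℤ)
    (h1 : x (i - 1) ≠ x i) (h2 : x (i - 1) ≠ x (j - 1)) (h3 : x (i - 1) ≠ x j)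
    (h4 : x i ≠ x (j - 1)) (h5 : x i ≠ x j) (h6 : x (j - 1) ≠ x j)
    (p q : ℝ × ℝ)
    (hp : p ∈ segment ℝ (x (i - 1)) (x i)) (hq : q ∈ segment ℝ (x (j - 1)) (x j)) :
    (segment ℝ p q ∩ ρ '' segment ℝ p q).Nonempty := by
  have hkR : (4:ℝ) ≤ (k:ℝ) := by exact_mod_cast hk
  have hk0 : (0:ℝ) < (k:ℝ) := by linarith
  have pi_pos := Real.pi_pos
  set θ : ℝ := 2 * Real.pi / k with hθdef
  have hθpos : 0 < θ := by positivity
  have hθk : θ * k = 2 * Real.pi := by rw [hθdef, div_mul_cancel₀ _ hk0.ne']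
  set X : ℤ → ℝ × ℝ := fun m => smrEE (θ * m) with hX
  have hxX : ∀ m : ℤ, x m = X m := by
    intro m
    rw [hx m]
    simp only [hX, smrEE]
    rw [show θ * (m:ℝ) = 2 * Real.pi * m / k by rw [hθdef]; ring]
  have hXper : ∀ (m : ℤ) (t : ℤ), X (m + k * t) = X m := by
    intro m t
    simp only [hX, smrEE]
    have harg : θ * ((m + (k:ℤ)*t : ℤ) : ℝ) = θ * m + t * (2*Real.pi) := by
      push_cast
      rw [← hθk]
      ring
    rw [harg, Real.cos_add_int_mul_two_pi, Real.sin_add_int_mul_two_pi]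
  have hρX : ∀ m : ℤ, ρ (X m) = X (m + 1) := by
    intro m
    simp only [hX, smrEE]
    rw [hρ]
    rw [show θ * ((m+1 : ℤ):ℝ) = θ * (m:ℝ) + θ by push_cast; ring,
      Real.cos_add, Real.sin_add]
    exact Prod.ext (by ring) (by ring)
  have hρcmb : ∀ (a : ℝ) (U V : ℝ × ℝ), ρ (smrCMB a U V) = smrCMB a (ρ U) (ρ V) := by
    intro a U V
    rw [hρ, hρ, hρ]
    simp only [smrCMB]
    exact Prod.ext (by ring) (by ring)
  -- the index gap
  set n : ℤ := (j - i) % (k:ℤ) with hndef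
  have hkz0 : (k:ℤ) ≠ 0 := by exact_mod_cast (by omega : k ≠ 0)
  have hkzpos : (0:ℤ) < (k:ℤ) := by exact_mod_cast (by omega : 0 < k)
  have hn0 : 0 ≤ n := Int.emod_nonneg _ hkz0
  have hnk : n < (k:ℤ) := Int.emod_lt_of_pos _ hkzpos
  have hdiv := Int.emod_add_mul_ediv (j - i) (k:ℤ)
  have hXj : X j = X (i + n) := by
    have hj : j = (i + n) + (k:ℤ) * ((j - i) / (k:ℤ)) := by
      rw [hndef]; linarith [hdiv]
    rw [hj, hXper]
  have hXj1 : X (j-1) = X (i + n - 1) := by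
    have hj : j - 1 = (i + n - 1) + (k:ℤ) * ((j - i) / (k:ℤ)) := by
      rw [hndef]; linarith [hdiv]
    rw [hj, hXper]
  have hn2 : 2 ≤ n := by
    have e0 : n ≠ 0 := by
      intro h
      apply h5
      rw [hxX, hxX, hXj, h, add_zero]
    have e1 : n ≠ 1 := by
      intro h
      apply h4
      rw [hxX, hxX, hXj1, h]
      congr 1
      omega
    omega
  have hnk2 : n + 2 ≤ (k:ℤ) := by
    have e2 : n ≠ (k:ℤ) - 1 := by
      intro h
      apply h3
      rw [hxX, hxX, hXj, h, show i + ((k:ℤ) - 1) = (i - 1) + (k:ℤ) * 1 by ring, hXper]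
    omega
  -- representations of the four points
  rw [hxX, hxX] at hp
  rw [hxX, hxX, hXj1, hXj] at hq
  obtain ⟨s, hs0, hs1, hps⟩ := smr_seg_repr hp
  obtain ⟨t, ht0, ht1, hqt⟩ := smr_seg_repr hq
  have hρp : ρ p = smrCMB s (X i) (X (i+1)) := by
    rw [hps, hρcmb, hρX, hρX, show i - 1 + 1 = i by omega]
  have hρq : ρ q = smrCMB t (X (i+n)) (X (i+n+1)) := by
    rw [hqt, hρcmb, hρX, hρX, show i + n - 1 + 1 = i + n by omega]
  have hps' : p = smrCMB s (X (i-1+(k:ℤ))) (X (i+(k:ℤ))) := by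
    rw [show i - 1 + (k:ℤ) = (i - 1) + (k:ℤ) * 1 by ring, hXper,
        show i + (k:ℤ) = i + (k:ℤ) * 1 by ring, hXper]
    exact hps
  -- nonnegativity and positivity of vertex triangles
  have crnn : ∀ m1 m2 m3 : ℤ, m1 ≤ m2 → m2 ≤ m3 → m3 - m1 ≤ (k:ℤ) →
      0 ≤ smrCR (X m1) (X m2) (X m3) := by
    intro m1 m2 m3 h12 h23 h31
    simp only [hX]
    apply smrCR_ee_nonneg
    · exact mul_le_mul_of_nonneg_left (by exact_mod_cast h12) hθpos.le
    · exact mul_le_mul_of_nonneg_left (by exact_mod_cast h23) hθpos.le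
    · have hc : ((m3:ℝ) - m1) ≤ (k:ℝ) := by exact_mod_cast h31
      calc θ * (m3:ℝ) - θ * m1 = θ * ((m3:ℝ) - m1) := by ring
        _ ≤ θ * k := mul_le_mul_of_nonneg_left hc hθpos.le
        _ = 2 * Real.pi := hθk
  have crpos : ∀ m1 m2 m3 : ℤ, m1 < m2 → m2 < m3 → m3 - m1 < (k:ℤ) →
      0 < smrCR (X m1) (X m2) (X m3) := by
    intro m1 m2 m3 h12 h23 h31
    simp only [hX]
    apply smrCR_ee_pos
    · exact mul_lt_mul_of_pos_left (by exact_mod_cast h12) hθpos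
    · exact mul_lt_mul_of_pos_left (by exact_mod_cast h23) hθpos
    · have hc : ((m3:ℝ) - m1) < (k:ℝ) := by exact_mod_cast h31
      calc θ * (m3:ℝ) - θ * m1 = θ * ((m3:ℝ) - m1) := by ring
        _ < θ * k := mul_lt_mul_of_pos_left hc hθpos
        _ = 2 * Real.pi := hθk
  have tnn : ∀ w1 w2 w3 D : ℝ, 0 ≤ w1 → 0 ≤ w2 → 0 ≤ w3 → 0 ≤ D → 0 ≤ w1*w2*w3*D :=
    fun w1 w2 w3 D hw1 hw2 hw3 hD =>
      mul_nonneg (mul_nonneg (mul_nonneg hw1 hw2) hw3) hD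
  have wz : ∀ w D : ℝ, 0 ≤ w → 0 < D → w * D ≤ 0 → w = 0 := by
    intro w D hw hD h
    by_contra hne
    have hwpos : 0 < w := lt_of_le_of_ne hw (Ne.symm hne)
    nlinarith
  -- general nonnegativity of mixed crosses
  have keynn : ∀ (a b c : ℝ) (u1 u2 v1 v2 w1 w2 : ℤ),
      0 ≤ a → a ≤ 1 → 0 ≤ b → b ≤ 1 → 0 ≤ c → c ≤ 1 →
      u1 ≤ u2 → u2 ≤ v1 → v1 ≤ v2 → v2 ≤ w1 → w1 ≤ w2 → w2 - u1 ≤ (k:ℤ) →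
      0 ≤ smrCR (smrCMB a (X u1) (X u2)) (smrCMB b (X v1) (X v2))
            (smrCMB c (X w1) (X w2)) := by
    intro a b c u1 u2 v1 v2 w1 w2 ha0 ha1 hb0 hb1 hc0 hc1 o1 o2 o3 o4 o5 o6
    rw [smrCR_cmb]
    have ha0' : (0:ℝ) ≤ 1 - a := by linarith
    have hb0' : (0:ℝ) ≤ 1 - b := by linarith
    have hc0' : (0:ℝ) ≤ 1 - c := by linarith
    have q1 := tnn (1-a) (1-b) (1-c) _ ha0' hb0' hc0'
      (crnn u1 v1 w1 (by omega) (by omega) (by omega))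
    have q2 := tnn (1-a) (1-b) c _ ha0' hb0' hc0
      (crnn u1 v1 w2 (by omega) (by omega) (by omega))
    have q3 := tnn (1-a) b (1-c) _ ha0' hb0 hc0'
      (crnn u1 v2 w1 (by omega) (by omega) (by omega))
    have q4 := tnn (1-a) b c _ ha0' hb0 hc0
      (crnn u1 v2 w2 (by omega) (by omega) (by omega))
    have q5 := tnn a (1-b) (1-c) _ ha0 hb0' hc0'
      (crnn u2 v1 w1 (by omega) (by omega) (by omega))
    have q6 := tnn a (1-b) c _ ha0 hb0' hc0
      (crnn u2 v1 w2 (by omega) (by omega) (by omega))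
    have q7 := tnn a b (1-c) _ ha0 hb0 hc0'
      (crnn u2 v2 w1 (by omega) (by omega) (by omega))
    have q8 := tnn a b c _ ha0 hb0 hc0
      (crnn u2 v2 w2 (by omega) (by omega) (by omega))
    linarith
  -- if a mixed cross vanishes, the two extreme weights vanish
  have keyzero : ∀ (a b c : ℝ) (u1 u2 v1 v2 w1 w2 : ℤ),
      0 ≤ a → a ≤ 1 → 0 ≤ b → b ≤ 1 → 0 ≤ c → c ≤ 1 →
      u1 < u2 → u2 ≤ v1 → v1 < v2 → v2 ≤ w1 → w1 < w2 → w2 - u1 ≤ (k:ℤ) →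
      smrCR (smrCMB a (X u1) (X u2)) (smrCMB b (X v1) (X v2))
          (smrCMB c (X w1) (X w2)) = 0 →
      (1-a)*(1-b)*(1-c) = 0 ∧ a*b*c = 0 := by
    intro a b c u1 u2 v1 v2 w1 w2 ha0 ha1 hb0 hb1 hc0 hc1 o1 o2 o3 o4 o5 o6 hzero
    rw [smrCR_cmb] at hzero
    have ha0' : (0:ℝ) ≤ 1 - a := by linarith
    have hb0' : (0:ℝ) ≤ 1 - b := by linarith
    have hc0' : (0:ℝ) ≤ 1 - c := by linarith
    have q2 := tnn (1-a) (1-b) c _ ha0' hb0' hc0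
      (crnn u1 v1 w2 (by omega) (by omega) (by omega))
    have q3 := tnn (1-a) b (1-c) _ ha0' hb0 hc0'
      (crnn u1 v2 w1 (by omega) (by omega) (by omega))
    have q4 := tnn (1-a) b c _ ha0' hb0 hc0
      (crnn u1 v2 w2 (by omega) (by omega) (by omega))
    have q5 := tnn a (1-b) (1-c) _ ha0 hb0' hc0'
      (crnn u2 v1 w1 (by omega) (by omega) (by omega))
    have q6 := tnn a (1-b) c _ ha0 hb0' hc0
      (crnn u2 v1 w2 (by omega) (by omega) (by omega))
    have q7 := tnn a b (1-c) _ ha0 hb0 hc0'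
      (crnn u2 v2 w1 (by omega) (by omega) (by omega))
    have P1 : 0 < smrCR (X u1) (X v1) (X w1) :=
      crpos _ _ _ (by omega) (by omega) (by omega)
    have P8 : 0 < smrCR (X u2) (X v2) (X w2) :=
      crpos _ _ _ (by omega) (by omega) (by omega)
    have w1nn : (0:ℝ) ≤ (1-a)*(1-b)*(1-c) :=
      mul_nonneg (mul_nonneg ha0' hb0') hc0'
    have w8nn : (0:ℝ) ≤ a*b*c := mul_nonneg (mul_nonneg ha0 hb0) hc0
    have h1le : (1-a)*(1-b)*(1-c) * smrCR (X u1) (X v1) (X w1) ≤ 0 := by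
      linarith [q2, q3, q4, q5, q6, q7, mul_nonneg w8nn P8.le, hzero]
    have h8le : a*b*c * smrCR (X u2) (X v2) (X w2) ≤ 0 := by
      linarith [q2, q3, q4, q5, q6, q7, mul_nonneg w1nn P1.le, hzero]
    exact ⟨wz _ _ w1nn P1 h1le, wz _ _ w8nn P8 h8le⟩
  -- the four sign conditions
  have C1nn : 0 ≤ smrCR p (ρ p) q := by
    rw [hρp, hps, hqt]
    exact keynn s s t (i-1) i i (i+1) (i+n-1) (i+n) hs0 hs1 hs0 hs1 ht0 ht1
      (by omega) (by omega) (by omega) (by omega) (by omega) (by omega)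
  have C2nn : 0 ≤ smrCR p q (ρ q) := by
    rw [hρq, hps, hqt]
    exact keynn s t t (i-1) i (i+n-1) (i+n) (i+n) (i+n+1) hs0 hs1 ht0 ht1 ht0 ht1
      (by omega) (by omega) (by omega) (by omega) (by omega) (by omega)
  have C3nn : 0 ≤ smrCR (ρ p) (ρ q) p := by
    rw [hρp, hρq, hps']
    exact keynn s t s i (i+1) (i+n) (i+n+1) (i-1+(k:ℤ)) (i+(k:ℤ))
      hs0 hs1 ht0 ht1 hs0 hs1
      (by omega) (by omega) (by omega) (by omega) (by omega) (by omega)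
  have C4nn : 0 ≤ smrCR (ρ p) q (ρ q) := by
    rw [hρp, hρq, hqt]
    exact keynn s t t i (i+1) (i+n-1) (i+n) (i+n) (i+n+1) hs0 hs1 ht0 ht1 ht0 ht1
      (by omega) (by omega) (by omega) (by omega) (by omega) (by omega)
  -- non-degeneracy blocks
  have block1 : ¬ (smrCR p (ρ p) q = 0 ∧ smrCR p q (ρ q) = 0) := by
    rintro ⟨hC1, hC2⟩
    have hC1' := hC1
    rw [hρp, hps, hqt] at hC1'
    have hC2' := hC2
    rw [hρq, hps, hqt] at hC2'
    obtain ⟨E1, E2⟩ := keyzero s s t (i-1) i i (i+1) (i+n-1) (i+n)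
      hs0 hs1 hs0 hs1 ht0 ht1
      (by omega) (by omega) (by omega) (by omega) (by omega) (by omega) hC1'
    obtain ⟨E3, E4⟩ := keyzero s t t (i-1) i (i+n-1) (i+n) (i+n) (i+n+1)
      hs0 hs1 ht0 ht1 ht0 ht1
      (by omega) (by omega) (by omega) (by omega) (by omega) (by omega) hC2'
    rcases smr_stsolve s t E1 E2 E3 E4 with ⟨hs, ht⟩ | ⟨hs, ht⟩
    · -- s = 1, t = 0 : contradicts hC2'
      rw [hs, ht, smrCMB_one, smrCMB_zero, smrCMB_zero] at hC2'
      exact absurd hC2'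
        (ne_of_gt (crpos i (i+n-1) (i+n) (by omega) (by omega) (by omega)))
    · -- s = 0, t = 1 : contradicts hC1'
      rw [hs, ht, smrCMB_zero, smrCMB_zero, smrCMB_one] at hC1'
      exact absurd hC1'
        (ne_of_gt (crpos (i-1) i (i+n) (by omega) (by omega) (by omega)))
  have block2 : ¬ (smrCR (ρ p) (ρ q) p = 0 ∧ smrCR (ρ p) q (ρ q) = 0) := by
    rintro ⟨hC3, hC4⟩
    have hC3' := hC3
    rw [hρp, hρq, hps'] at hC3'
    have hC4' := hC4
    rw [hρp, hρq, hqt] at hC4'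
    obtain ⟨E1', E2'⟩ := keyzero s t s i (i+1) (i+n) (i+n+1) (i-1+(k:ℤ)) (i+(k:ℤ))
      hs0 hs1 ht0 ht1 hs0 hs1
      (by omega) (by omega) (by omega) (by omega) (by omega) (by omega) hC3'
    obtain ⟨E3, E4⟩ := keyzero s t t i (i+1) (i+n-1) (i+n) (i+n) (i+n+1)
      hs0 hs1 ht0 ht1 ht0 ht1
      (by omega) (by omega) (by omega) (by omega) (by omega) (by omega) hC4'
    have E1 : (1-s)*(1-s)*(1-t) = 0 := by linear_combination E1'
    have E2 : s*s*t = 0 := by linear_combination E2'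
    rcases smr_stsolve s t E1 E2 E3 E4 with ⟨hs, ht⟩ | ⟨hs, ht⟩
    · -- s = 1, t = 0 : contradicts hC3'
      rw [hs, ht, smrCMB_one, smrCMB_zero, smrCMB_one] at hC3'
      exact absurd hC3'
        (ne_of_gt (crpos (i+1) (i+n) (i+(k:ℤ)) (by omega) (by omega) (by omega)))
    · -- s = 0, t = 1 : contradicts hC4'
      rw [hs, ht, smrCMB_zero, smrCMB_one, smrCMB_one] at hC4'
      exact absurd hC4'
        (ne_of_gt (crpos i (i+n) (i+n+1) (by omega) (by omega) (by omega)))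
  -- apply the intersection lemma
  have h12 : smrCR p q (ρ p) * smrCR p q (ρ q) ≤ 0 := by
    rw [smrCR_swap p q (ρ p)]
    nlinarith [mul_nonneg C1nn C2nn]
  have h34 : smrCR (ρ p) (ρ q) p * smrCR (ρ p) (ρ q) q ≤ 0 := by
    rw [smrCR_swap (ρ p) (ρ q) q]
    nlinarith [mul_nonneg C3nn C4nn]
  have hne1 : smrCR p q (ρ p) ≠ 0 ∨ smrCR p q (ρ q) ≠ 0 := by
    by_contra h
    push_neg at h
    exact block1 ⟨by rw [smrCR_swap p (ρ p) q, h.1, neg_zero], h.2⟩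
  have hne2 : smrCR (ρ p) (ρ q) p ≠ 0 ∨ smrCR (ρ p) (ρ q) q ≠ 0 := by
    by_contra h
    push_neg at h
    exact block2 ⟨h.1, by rw [smrCR_swap (ρ p) q (ρ q), h.2, neg_zero]⟩
  obtain ⟨z, hz1, hz2⟩ := smr_seg_inter p q (ρ p) (ρ q) h12 h34 hne1 hne2
  refine ⟨z, hz1, ?_⟩
  obtain ⟨a, haz0, haz1, hza⟩ := smr_seg_repr hz2
  exact ⟨smrCMB a p q, smr_mem_seg haz0 haz1, by rw [hρcmb, ← hza]⟩
end

section
/- Let k ≥ 3 and let x_j = (cos(2πj/k), sin(2πj/k)) for j ∈ ℤ (indices modulo k) be the vertices of the regular k-gon inscribed in the unit circle, with sides the closed segments [x_{j}, x_{j+1}]. Let ρ : ℝ² → ℝ² be the rotation through angle 2π/k about the origin. Fix an index i, let p be a point of the open side (x_{i−2}, x_{i−1}) (the segment without its endpoints), q a point of the open side (x_{i−1}, x_i), and r a point of the open side (x_i, x_{i+1}), and set M = [p, q] ∪ [q, r]. Then M ∩ ρ(M) ≠ ∅. -/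
set_option maxHeartbeats 1000000

noncomputable def cr3 (u v w : ℝ × ℝ) : ℝ :=
  (v.1 - u.1) * (w.2 - u.2) - (v.2 - u.2) * (w.1 - u.1)

lemma dd (X Y : ℝ) :
    Real.cos X * Real.sin Y - Real.sin X * Real.cos Y = Real.sin (Y - X) := by
  rw [Real.sin_sub]; ring

lemma seg_inter {u v w z : ℝ × ℝ} (hw : cr3 u v w < 0) (hz : 0 < cr3 u v z)
    (h1 : 0 ≤ cr3 w z u) (h2 : cr3 w z v ≤ 0) :
    ∃ X, X ∈ segment ℝ u v ∧ X ∈ segment ℝ w z := by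
  have hrel : cr3 w z v = cr3 w z u - (cr3 u v z - cr3 u v w) := by
    simp only [cr3]; ring
  have hD : 0 < cr3 u v z - cr3 u v w := by linarith
  have hDne : cr3 u v z - cr3 u v w ≠ 0 := ne_of_gt hD
  set s : ℝ := cr3 w z u / (cr3 u v z - cr3 u v w) with hs
  set t : ℝ := -cr3 u v w / (cr3 u v z - cr3 u v w) with ht
  have hs0 : 0 ≤ s := div_nonneg h1 hD.le
  have hs1 : s ≤ 1 := by rw [hs, div_le_one hD]; linarith
  have ht0 : 0 ≤ t := div_nonneg (by linarith) hD.le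
  have ht1 : t ≤ 1 := by rw [ht, div_le_one hD]; linarith
  refine ⟨(1-s) • u + s • v, ⟨1-s, s, by linarith, hs0, by ring, rfl⟩,
    ⟨1-t, t, by linarith, ht0, by ring, ?_⟩⟩
  have key1 : (1-t)*w.1 + t*z.1 = (1-s)*u.1 + s*v.1 := by
    rw [hs, ht]; field_simp; simp only [cr3]; ring
  have key2 : (1-t)*w.2 + t*z.2 = (1-s)*u.2 + s*v.2 := by
    rw [hs, ht]; field_simp; simp only [cr3]; ring
  rw [Prod.ext_iff]
  constructor <;> simp only [Prod.fst_add, Prod.snd_add, Prod.smul_fst, Prod.smul_snd,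
    smul_eq_mul]
  · exact key1
  · exact key2


/-- In the regular `k`-gon (`k ≥ 3`) inscribed in the unit circle, with `ρ` the rotation
through angle `2π/k` about the origin: an m-shaped curve `M = [p,q] ∪ [q,r]` whose
endpoints `p, q, r` lie in the open sides `(x_{i-2}, x_{i-1})`, `(x_{i-1}, x_i)` and
`(x_i, x_{i+1})` respectively must meet its rotated image `ρ(M)`. -/
theorem mshape_meets_rotation (k : ℕ) (hk : 3 ≤ k)
    (x : ℤ → ℝ × ℝ)
    (hx : ∀ j : ℤ, x j = (Real.cos (2 * Real.pi * j / k), Real.sin (2 * Real.pi * j / k)))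
    (ρ : ℝ × ℝ → ℝ × ℝ)
    (hρ : ∀ v : ℝ × ℝ, ρ v =
      (Real.cos (2 * Real.pi / k) * v.1 - Real.sin (2 * Real.pi / k) * v.2,
       Real.sin (2 * Real.pi / k) * v.1 + Real.cos (2 * Real.pi / k) * v.2))
    (i : ℤ) (p q r : ℝ × ℝ)
    (hp : p ∈ openSegment ℝ (x (i - 2)) (x (i - 1)))
    (hq : q ∈ openSegment ℝ (x (i - 1)) (x i))
    (hr : r ∈ openSegment ℝ (x i) (x (i + 1))) :
    ((segment ℝ p q ∪ segment ℝ q r) ∩ ρ '' (segment ℝ p q ∪ segment ℝ q r)).Nonempty := by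
  obtain ⟨a', a, ha'0, ha0, haa, hpe⟩ := hp
  obtain ⟨b', b, hb'0, hb0, hbb, hqe⟩ := hq
  obtain ⟨c', c, hc'0, hc0, hcc, hre⟩ := hr
  have hπ := Real.pi_pos
  have hk0 : (0:ℝ) < (k:ℝ) := by exact_mod_cast Nat.pos_of_ne_zero (by omega)
  set θ := 2 * Real.pi / (k:ℝ) with hθ
  have hθ0 : 0 < θ := by rw [hθ]; positivity
  have hθle : θ ≤ 2 * Real.pi / 3 := by
    rw [hθ]
    apply div_le_div_of_nonneg_left (by positivity) (by norm_num)
    exact_mod_cast hk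
  have hθπ : θ < Real.pi := by linarith
  set S := Real.sin θ with hS
  set C := Real.cos θ with hC
  have hS0 : 0 < S := Real.sin_pos_of_pos_of_lt_pi hθ0 hθπ
  have hpy : S^2 + C^2 = 1 := Real.sin_sq_add_cos_sq θ
  have hC1 : C < 1 := by nlinarith [sq_nonneg (C-1)]
  have hChalf : -(1/2 : ℝ) ≤ C := by
    rw [hC]
    have h23 : Real.cos (2*Real.pi/3) = -(1/2) := by
      rw [show (2*Real.pi/3 : ℝ) = Real.pi - Real.pi/3 by ring, Real.cos_pi_sub,
        Real.cos_pi_div_three]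
    rw [← h23]
    exact Real.cos_le_cos_of_nonneg_of_le_pi hθ0.le (by linarith) hθle
  set A := 2 * Real.pi * ((i:ℝ) - 2) / (k:ℝ) with hA
  set T1 := A + θ with hT1
  set T2 := A + 2*θ with hT2
  set T3 := A + 3*θ with hT3
  set T4 := A + 4*θ with hT4
  have hkne : (k:ℝ) ≠ 0 := ne_of_gt hk0
  have hv0 : x (i-2) = (Real.cos A, Real.sin A) := by
    rw [hx, show (2*Real.pi*((i-2:ℤ):ℝ)/(k:ℝ)) = A from by rw [hA]; norm_num]
  have hv1 : x (i-1) = (Real.cos T1, Real.sin T1) := by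
    rw [hx, show (2*Real.pi*((i-1:ℤ):ℝ)/(k:ℝ)) = T1 from by
      rw [hT1, hA, hθ]; push_cast; field_simp; ring]
  have hv2 : x i = (Real.cos T2, Real.sin T2) := by
    rw [hx, show (2*Real.pi*((i:ℤ):ℝ)/(k:ℝ)) = T2 from by
      rw [hT2, hA, hθ]; field_simp; ring]
  have hv3 : x (i+1) = (Real.cos T3, Real.sin T3) := by
    rw [hx, show (2*Real.pi*((i+1:ℤ):ℝ)/(k:ℝ)) = T3 from by
      rw [hT3, hA, hθ]; push_cast; field_simp; ring]
  have hρang : ∀ B : ℝ, ρ (Real.cos B, Real.sin B) = (Real.cos (B + θ), Real.sin (B + θ)) := by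
    intro B
    rw [hρ]
    simp only [Real.cos_add, Real.sin_add, Prod.mk.injEq]
    constructor <;> ring
  have hρlin : ∀ (s t : ℝ) (u w : ℝ×ℝ), ρ (s • u + t • w) = s • ρ u + t • ρ w := by
    intro s t u w
    simp only [hρ, Prod.fst_add, Prod.snd_add, Prod.smul_fst, Prod.smul_snd, smul_eq_mul,
      Prod.smul_mk, Prod.mk_add_mk, Prod.mk.injEq]
    constructor <;> ring
  rw [hv0, hv1] at hpe
  rw [hv1, hv2] at hqe
  rw [hv2, hv3] at hre
  have ha1 : a' = 1 - a := by linarith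
  have hb1 : b' = 1 - b := by linarith
  have hc1 : c' = 1 - c := by linarith
  subst ha1; subst hb1; subst hc1
  have ha2 : a < 1 := by linarith
  have hb2 : b < 1 := by linarith
  have hc2 : c < 1 := by linarith
  have hρp : ρ p = (1-a) • (Real.cos T1, Real.sin T1) + a • (Real.cos T2, Real.sin T2) := by
    rw [← hpe, hρlin, hρang, hρang, show A + θ = T1 from hT1.symm,
      show T1 + θ = T2 from by rw [hT1, hT2]; ring]
  have hρq : ρ q = (1-b) • (Real.cos T2, Real.sin T2) + b • (Real.cos T3, Real.sin T3) := by
    rw [← hqe, hρlin, hρang, hρang, show T1 + θ = T2 from by rw [hT1, hT2]; ring,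
      show T2 + θ = T3 from by rw [hT2, hT3]; ring]
  have hρr : ρ r = (1-c) • (Real.cos T3, Real.sin T3) + c • (Real.cos T4, Real.sin T4) := by
    rw [← hre, hρlin, hρang, hρang, show T2 + θ = T3 from by rw [hT2, hT3]; ring,
      show T3 + θ = T4 from by rw [hT3, hT4]; ring]
  -- d values
  have d01 : Real.cos A * Real.sin T1 - Real.sin A * Real.cos T1 = S := by
    rw [dd, show T1 - A = θ from by rw [hT1]; ring, hS]
  have d02 : Real.cos A * Real.sin T2 - Real.sin A * Real.cos T2 = 2*S*C := by
    rw [dd, show T2 - A = 2*θ from by rw [hT2]; ring, Real.sin_two_mul, hS, hC]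
  have d03 : Real.cos A * Real.sin T3 - Real.sin A * Real.cos T3 = 3*S - 4*S^3 := by
    rw [dd, show T3 - A = 3*θ from by rw [hT3]; ring, Real.sin_three_mul, hS]
  have d12 : Real.cos T1 * Real.sin T2 - Real.sin T1 * Real.cos T2 = S := by
    rw [dd, show T2 - T1 = θ from by rw [hT1, hT2]; ring, hS]
  have d13 : Real.cos T1 * Real.sin T3 - Real.sin T1 * Real.cos T3 = 2*S*C := by
    rw [dd, show T3 - T1 = 2*θ from by rw [hT1, hT3]; ring, Real.sin_two_mul, hS, hC]
  have d14 : Real.cos T1 * Real.sin T4 - Real.sin T1 * Real.cos T4 = 3*S - 4*S^3 := by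
    rw [dd, show T4 - T1 = 3*θ from by rw [hT1, hT4]; ring, Real.sin_three_mul, hS]
  have d23 : Real.cos T2 * Real.sin T3 - Real.sin T2 * Real.cos T3 = S := by
    rw [dd, show T3 - T2 = θ from by rw [hT2, hT3]; ring, hS]
  have d24 : Real.cos T2 * Real.sin T4 - Real.sin T2 * Real.cos T4 = 2*S*C := by
    rw [dd, show T4 - T2 = 2*θ from by rw [hT2, hT4]; ring, Real.sin_two_mul, hS, hC]
  have d34 : Real.cos T3 * Real.sin T4 - Real.sin T3 * Real.cos T4 = S := by
    rw [dd, show T4 - T3 = θ from by rw [hT3, hT4]; ring, hS]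
  -- cross product values
  have E1 : cr3 p q (ρ p) = -(2*S*(1-C) * ((1-a)*(b-a))) := by
    rw [hρp]
    simp only [cr3, ← hpe, ← hqe, Prod.smul_mk, Prod.mk_add_mk, smul_eq_mul]
    linear_combination (a - b + a*b - a^2) * d01 + (b - a - a*b + a^2) * d02 +
      (a - b + a*b - a^2) * d12
  have E2 : cr3 p q (ρ q) = 2*S*(1-C) * ((1-a-b)^2 + a*(1-a))
      + 2*S*(1-C)*(1+2*C) * (b*(1-a)) := by
    rw [hρq]
    simp only [cr3, ← hpe, ← hqe, Prod.smul_mk, Prod.mk_add_mk, smul_eq_mul]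
    linear_combination (1 - b - a + a*b) * d01 + (-1 + 2*b + a - 2*a*b) * d02 +
      (-b + a*b) * d03 + (1 - 2*b + b^2 - a + 2*a*b) * d12 + (b - b^2 - a*b) * d13 +
      (b^2) * d23 + (4*S*(b*(1-a))) * hpy
  have E3 : cr3 (ρ p) (ρ q) p = 2*S*(1-C) * ((1-a-b)^2 + b*(1-b))
      + 2*S*(1-C)*(1+2*C) * (b*(1-a)) := by
    rw [hρp, hρq]
    simp only [cr3, ← hpe, Prod.smul_mk, Prod.mk_add_mk, smul_eq_mul]
    linear_combination (1 - 2*a + a^2) * d01 + (-1 + b + 2*a - a*b - a^2) * d02 +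
      (-b + a*b) * d03 + (1 - b - 2*a + 2*a*b + a^2) * d12 + (b - 2*a*b) * d13 +
      (a*b) * d23 + (4*S*(b*(1-a))) * hpy
  have E4 : cr3 (ρ p) (ρ q) q = 2*S*(1-C) * (b*(a-b)) := by
    rw [hρp, hρq]
    simp only [cr3, ← hqe, Prod.smul_mk, Prod.mk_add_mk, smul_eq_mul]
    linear_combination (-b^2 + a*b) * d12 + (b^2 - a*b) * d13 + (-b^2 + a*b) * d23
  have E5 : cr3 q r (ρ q) = -(2*S*(1-C) * ((1-b)*(c-b))) := by
    rw [hρq]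
    simp only [cr3, ← hqe, ← hre, Prod.smul_mk, Prod.mk_add_mk, smul_eq_mul]
    linear_combination (b - c + b*c - b^2) * d12 + (c - b - b*c + b^2) * d13 +
      (b - c + b*c - b^2) * d23
  have E6 : cr3 q r (ρ r) = 2*S*(1-C) * ((1-b-c)^2 + b*(1-b))
      + 2*S*(1-C)*(1+2*C) * (c*(1-b)) := by
    rw [hρr]
    simp only [cr3, ← hqe, ← hre, Prod.smul_mk, Prod.mk_add_mk, smul_eq_mul]
    linear_combination (1 - c - b + b*c) * d12 + (-1 + 2*c + b - 2*b*c) * d13 +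
      (-c + b*c) * d14 + (1 - 2*c + c^2 - b + 2*b*c) * d23 + (c - c^2 - b*c) * d24 +
      (c^2) * d34 + (4*S*(c*(1-b))) * hpy
  have E7 : cr3 (ρ q) (ρ r) q = 2*S*(1-C) * ((1-b-c)^2 + c*(1-c))
      + 2*S*(1-C)*(1+2*C) * (c*(1-b)) := by
    rw [hρq, hρr]
    simp only [cr3, ← hqe, Prod.smul_mk, Prod.mk_add_mk, smul_eq_mul]
    linear_combination (1 - 2*b + b^2) * d12 + (-1 + c + 2*b - b*c - b^2) * d13 +
      (-c + b*c) * d14 + (1 - c - 2*b + 2*b*c + b^2) * d23 + (c - 2*b*c) * d24 +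
      (b*c) * d34 + (4*S*(c*(1-b))) * hpy
  have E8 : cr3 (ρ q) (ρ r) r = 2*S*(1-C) * (c*(b-c)) := by
    rw [hρq, hρr]
    simp only [cr3, ← hre, Prod.smul_mk, Prod.mk_add_mk, smul_eq_mul]
    linear_combination (-c^2 + b*c) * d23 + (c^2 - b*c) * d24 + (-c^2 + b*c) * d34
  have E9 : cr3 q r (ρ p) = 2*S*(1-C) * (c*(b-a)) := by
    rw [hρp]
    simp only [cr3, ← hqe, ← hre, Prod.smul_mk, Prod.mk_add_mk, smul_eq_mul]
    linear_combination (b*c - a*c) * d12 + (-b*c + a*c) * d13 + (b*c - a*c) * d23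
  have E10 : cr3 (ρ p) (ρ q) r = 2*S*(1-C) * ((c-b)*(1-a)) := by
    rw [hρp, hρq]
    simp only [cr3, ← hre, Prod.smul_mk, Prod.mk_add_mk, smul_eq_mul]
    linear_combination (c - b - a*c + a*b) * d12 + (-c + b + a*c - a*b) * d13 +
      (c - b - a*c + a*b) * d23
  have hE : 0 < 2*S*(1-C) := by
    have h := mul_pos hS0 (sub_pos.mpr hC1)
    linarith
  have hF : 0 ≤ 2*S*(1-C)*(1+2*C) :=
    mul_nonneg hE.le (by linarith)
  rcases lt_trichotomy a b with hab | hab | hab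
  · -- a < b : [p,q] meets ρ[p,q]
    have i1 : cr3 p q (ρ p) < 0 := by
      rw [E1]
      have h := mul_pos hE (mul_pos (show (0:ℝ) < 1-a by linarith) (show (0:ℝ) < b-a by linarith))
      linarith
    have i2 : 0 < cr3 p q (ρ q) := by
      rw [E2]
      have hin : 0 < (1-a-b)^2 + a*(1-a) := by
        have h1 := mul_pos ha0 (show (0:ℝ) < 1-a by linarith)
        have h2 := sq_nonneg (1-a-b)
        linarith
      have h3 := mul_pos hE hin
      have h4 := mul_nonneg hF (mul_nonneg hb0.le (show (0:ℝ) ≤ 1-a by linarith))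
      linarith
    have i3 : 0 ≤ cr3 (ρ p) (ρ q) p := by
      rw [E3]
      have hin : 0 < (1-a-b)^2 + b*(1-b) := by
        have h1 := mul_pos hb0 (show (0:ℝ) < 1-b by linarith)
        have h2 := sq_nonneg (1-a-b)
        linarith
      have h3 := mul_pos hE hin
      have h4 := mul_nonneg hF (mul_nonneg hb0.le (show (0:ℝ) ≤ 1-a by linarith))
      linarith
    have i4 : cr3 (ρ p) (ρ q) q ≤ 0 := by
      rw [E4]
      have h := mul_pos hE (mul_pos hb0 (show (0:ℝ) < b-a by linarith))
      linarith [h]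
    obtain ⟨X, hX1, hX2⟩ := seg_inter i1 i2 i3 i4
    obtain ⟨α, β, hα0, hβ0, hαβ, hXe⟩ := hX2
    exact ⟨X, Or.inl hX1, ⟨α • p + β • q, Or.inl ⟨α, β, hα0, hβ0, hαβ, rfl⟩,
      by rw [hρlin]; exact hXe⟩⟩
  · -- a = b : q = ρ p
    have hqρ : ρ p = q := by rw [hρp, ← hqe, hab]
    exact ⟨q, Or.inl (right_mem_segment ℝ p q),
      ⟨p, Or.inl (left_mem_segment ℝ p q), hqρ⟩⟩
  · rcases lt_trichotomy b c with hbc | hbc | hbc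
    · -- b < c : [q,r] meets ρ[q,r]
      have i1 : cr3 q r (ρ q) < 0 := by
        rw [E5]
        have h := mul_pos hE (mul_pos (show (0:ℝ) < 1-b by linarith)
          (show (0:ℝ) < c-b by linarith))
        linarith
      have i2 : 0 < cr3 q r (ρ r) := by
        rw [E6]
        have hin : 0 < (1-b-c)^2 + b*(1-b) := by
          have h1 := mul_pos hb0 (show (0:ℝ) < 1-b by linarith)
          have h2 := sq_nonneg (1-b-c)
          linarith
        have h3 := mul_pos hE hin
        have h4 := mul_nonneg hF (mul_nonneg hc0.le (show (0:ℝ) ≤ 1-b by linarith))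
        linarith
      have i3 : 0 ≤ cr3 (ρ q) (ρ r) q := by
        rw [E7]
        have hin : 0 < (1-b-c)^2 + c*(1-c) := by
          have h1 := mul_pos hc0 (show (0:ℝ) < 1-c by linarith)
          have h2 := sq_nonneg (1-b-c)
          linarith
        have h3 := mul_pos hE hin
        have h4 := mul_nonneg hF (mul_nonneg hc0.le (show (0:ℝ) ≤ 1-b by linarith))
        linarith
      have i4 : cr3 (ρ q) (ρ r) r ≤ 0 := by
        rw [E8]
        have h := mul_pos hE (mul_pos hc0 (show (0:ℝ) < c-b by linarith))
        linarith [h]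
      obtain ⟨X, hX1, hX2⟩ := seg_inter i1 i2 i3 i4
      obtain ⟨α, β, hα0, hβ0, hαβ, hXe⟩ := hX2
      exact ⟨X, Or.inr hX1, ⟨α • q + β • r, Or.inr ⟨α, β, hα0, hβ0, hαβ, rfl⟩,
        by rw [hρlin]; exact hXe⟩⟩
    · -- b = c : r = ρ q
      have hrρ : ρ q = r := by rw [hρq, ← hre, hbc]
      exact ⟨r, Or.inr (right_mem_segment ℝ q r),
        ⟨q, Or.inr (left_mem_segment ℝ q r), hrρ⟩⟩
    · -- c < b < a : [q,r] meets ρ[p,q]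
      have i1 : cr3 q r (ρ p) < 0 := by
        rw [E9]
        have h := mul_pos hE (mul_pos hc0 (show (0:ℝ) < a-b by linarith))
        linarith [h]
      have i2 : 0 < cr3 q r (ρ q) := by
        rw [E5]
        have h := mul_pos hE (mul_pos (show (0:ℝ) < 1-b by linarith)
          (show (0:ℝ) < b-c by linarith))
        linarith [h]
      have i3 : 0 ≤ cr3 (ρ p) (ρ q) q := by
        rw [E4]
        have h := mul_pos hE (mul_pos hb0 (show (0:ℝ) < a-b by linarith))
        linarith [h]
      have i4 : cr3 (ρ p) (ρ q) r ≤ 0 := by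
        rw [E10]
        have h := mul_pos hE (mul_pos (show (0:ℝ) < b-c by linarith)
          (show (0:ℝ) < 1-a by linarith))
        linarith [h]
      obtain ⟨X, hX1, hX2⟩ := seg_inter i1 i2 i3 i4
      obtain ⟨α, β, hα0, hβ0, hαβ, hXe⟩ := hX2
      exact ⟨X, Or.inr hX1, ⟨α • p + β • q, Or.inl ⟨α, β, hα0, hβ0, hαβ, rfl⟩,
        by rw [hρlin]; exact hXe⟩⟩
end
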